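/- For 0 < ε < λ and u ∈ [0,1], the function Φ_ε(u) = 1 - (ε/λ + ((λ-ε)/λ)(1-u)³)^{1/3} is concave on [0,1]. -/

import Mathlib

open Real Set
open scoped ENNReal

/-- For `0 < ε < λ`, the function `Φ_ε(u) = 1 - (ε/λ + ((λ-ε)/λ)(1-u)³)^{1/3}`
is concave on `[0,1]`. -/
theorem stmt13 (lam ε : ℝ) (hε : 0 < ε) (hεlam : ε < lam)
    (Φ : ℝ → ℝ)
    (hΦ : ∀ u, Φ u = 1 - (ε / lam + ((lam - ε) / lam) * (1 - u) ^ 3) ^ ((1:ℝ)/3)) :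
    ConcaveOn ℝ (Set.Icc (0:ℝ) 1) Φ := by
  have hlam : 0 < lam := hε.trans hεlam
  set a := ε / lam with ha_def
  set b := (lam - ε) / lam with hb_def
  have ha : 0 < a := div_pos hε hlam
  have hb : 0 < b := div_pos (by linarith) hlam
  haveI : Fact ((1:ℝ≥0∞) ≤ 3) := ⟨by norm_num⟩
  let v : ℝ → PiLp 3 (fun _ : Fin 2 => ℝ) :=
    fun u => WithLp.toLp 3 ![a ^ ((1:ℝ)/3), b ^ ((1:ℝ)/3) * (1 - u)]
  have hnorm : ∀ u : ℝ, 0 ≤ 1 - u →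
      ‖v u‖ = (a + b * (1 - u) ^ 3) ^ ((1:ℝ)/3) := by
    intro u hu
    rw [PiLp.norm_eq_sum (by norm_num : 0 < ((3:ℝ≥0∞)).toReal)]
    have h3 : ((3:ℝ≥0∞)).toReal = 3 := by norm_num
    rw [h3, Fin.sum_univ_two]
    have e0 : (v u) 0 = a ^ ((1:ℝ)/3) := rfl
    have e1 : (v u) 1 = b ^ ((1:ℝ)/3) * (1 - u) := rfl
    rw [e0, e1]
    have hra : (0:ℝ) ≤ a ^ ((1:ℝ)/3) := Real.rpow_nonneg ha.le _
    have hrb : (0:ℝ) ≤ b ^ ((1:ℝ)/3) := Real.rpow_nonneg hb.le _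
    rw [Real.norm_of_nonneg hra, Real.norm_of_nonneg (mul_nonneg hrb hu)]
    rw [Real.mul_rpow hrb hu, ← Real.rpow_mul ha.le, ← Real.rpow_mul hb.le,
      ← Real.rpow_natCast (1 - u) 3]
    norm_num
  have hg : ConvexOn ℝ (Icc (0:ℝ) 1) (fun u => ‖v u‖) := by
    refine ⟨convex_Icc 0 1, ?_⟩
    intro x _ y _ p q hp hq hpq
    have hv : v (p • x + q • y) = p • v x + q • v y := by
      refine PiLp.ext fun i => ?_
      fin_cases i
      · show a ^ ((1:ℝ)/3) = p * (a ^ ((1:ℝ)/3)) + q * (a ^ ((1:ℝ)/3))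
        linear_combination (-(a ^ ((1:ℝ)/3))) * hpq
      · show b ^ ((1:ℝ)/3) * (1 - (p * x + q * y))
            = p * (b ^ ((1:ℝ)/3) * (1 - x)) + q * (b ^ ((1:ℝ)/3) * (1 - y))
        linear_combination (-(b ^ ((1:ℝ)/3))) * hpq
    calc ‖v (p • x + q • y)‖ = ‖p • v x + q • v y‖ := by rw [hv]
      _ ≤ ‖p • v x‖ + ‖q • v y‖ := norm_add_le _ _
      _ = p * ‖v x‖ + q * ‖v y‖ := by
          rw [norm_smul, norm_smul, Real.norm_of_nonneg hp, Real.norm_of_nonneg hq]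
  refine ⟨convex_Icc 0 1, ?_⟩
  intro x hx y hy p q hp hq hpq
  simp only [smul_eq_mul]
  have hx1 : (0:ℝ) ≤ 1 - x := by linarith [hx.2]
  have hy1 : (0:ℝ) ≤ 1 - y := by linarith [hy.2]
  have hxy1 : (0:ℝ) ≤ 1 - (p * x + q * y) := by
    nlinarith [hx.1, hx.2, hy.1, hy.2]
  have key := hg.2 hx hy hp hq hpq
  simp only [smul_eq_mul] at key
  rw [hnorm x hx1, hnorm y hy1, hnorm _ hxy1] at key
  rw [hΦ, hΦ, hΦ]
  linarith [key]
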